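/- For 1 ≤ i ≤ n and 1 ≤ j ≤ n, the covering minima of the polytope P_{n,i} with respect to ℤ^n are: μ_j(P_{n,i}) = 1/2 if j ≤ i, and μ_j(P_{n,i}) = j/(2i) if j > i. In particular, μ_i(C_n) = 1/2 and μ_i(C_n^⋆) = i/2 for all i ∈ {1, …, n}. -/

import Mathlib

open MeasureTheory Pointwise

/-- The integer lattice `ℤⁿ` viewed as a subset of `ℝⁿ`. -/
def intLattice (n : ℕ) : Set (EuclideanSpace ℝ (Fin n)) :=
  {x | ∀ j, ∃ m : ℤ, x j = (m : ℝ)}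

/-- The `i`-th covering minimum `μ_i(K, ℤⁿ)` of a convex body `K ⊆ ℝⁿ`:
the least `μ > 0` such that `μK + ℤⁿ` meets every `(n-i)`-dimensional affine subspace. -/
noncomputable def covMin (n i : ℕ) (K : Set (EuclideanSpace ℝ (Fin n))) : ℝ :=
  sInf {μ : ℝ | 0 < μ ∧ ∀ L : AffineSubspace ℝ (EuclideanSpace ℝ (Fin n)),
    (L : Set (EuclideanSpace ℝ (Fin n))).Nonempty →
    Module.finrank ℝ L.direction = n - i →
    ((μ • K + intLattice n) ∩ (L : Set (EuclideanSpace ℝ (Fin n)))).Nonempty}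

/-- The cube `C_n = [-1,1]ⁿ`. -/
def cube (n : ℕ) : Set (EuclideanSpace ℝ (Fin n)) := {x | ∀ j, |x j| ≤ 1}

/-- The crosspolytope `C_n^⋆ = conv{±e_1, …, ±e_n}`. -/
def crosspolytope (n : ℕ) : Set (EuclideanSpace ℝ (Fin n)) := {x | ∑ j, |x j| ≤ 1}

/-- The polytope `P_{n,i} = C_n ∩ i·C_n^⋆`, interpolating between crosspolytope and cube. -/
noncomputable def Pcc (n i : ℕ) : Set (EuclideanSpace ℝ (Fin n)) :=
  cube n ∩ (i : ℝ) • crosspolytope n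

lemma euc_sum_apply {n : ℕ} {ι : Type*} [Fintype ι] (f : ι → EuclideanSpace ℝ (Fin n)) (k : Fin n) :
    (∑ i, f i) k = ∑ i, f i k :=
  map_sum (EuclideanSpace.projₗ k) f Finset.univ

open Module Submodule in
lemma key_cover (n j : ℕ) (hj : j ≤ n) (L : AffineSubspace ℝ (EuclideanSpace ℝ (Fin n)))
    (hL : (L : Set (EuclideanSpace ℝ (Fin n))).Nonempty)
    (hdim : Module.finrank ℝ L.direction = n - j) :
    ∃ y z : EuclideanSpace ℝ (Fin n), z ∈ intLattice n ∧ (∀ k, |y k| ≤ 1/2) ∧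
      (∑ k, |y k|) ≤ j/2 ∧ y + z ∈ (L : Set (EuclideanSpace ℝ (Fin n))) := by
  classical
  set d := n - j with hd
  set V := L.direction with hV
  have b : Basis (Fin d) ℝ V := Module.finBasisOfFinrankEq ℝ V hdim
  set u : Fin n → EuclideanSpace ℝ (Fin d) :=
    fun k => (WithLp.equiv 2 (Fin d → ℝ)).symm (fun a => ((b a : EuclideanSpace ℝ (Fin n)) k))
    with hu
  have hu_apply : ∀ k a, u k a = ((b a : EuclideanSpace ℝ (Fin n)) k) := by
    intro k a; rw [hu]; exact rfl
  have hspan : span ℝ (Set.range u) = ⊤ := by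
    by_contra h
    have hob : (span ℝ (Set.range u))ᗮ ≠ ⊥ := by
      intro hb; exact h (Submodule.orthogonal_eq_bot_iff.mp hb)
    obtain ⟨w, hw, hw0⟩ := Submodule.exists_mem_ne_zero_of_ne_bot hob
    have hinner : ∀ k, ∑ a, (b a : EuclideanSpace ℝ (Fin n)) k * w a = 0 := by
      intro k
      have := (Submodule.mem_orthogonal _ _).mp hw (u k) (Submodule.subset_span ⟨k, rfl⟩)
      rw [PiLp.inner_apply] at this
      simpa [hu_apply, RCLike.inner_apply, conj_trivial, mul_comm] using this
    have hsum : (∑ a, w a • b a) = 0 := by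
      apply Subtype.ext
      have h1 : ((∑ a, w a • b a : V) : EuclideanSpace ℝ (Fin n))
          = ∑ a, w a • (b a : EuclideanSpace ℝ (Fin n)) := by push_cast; rfl
      rw [h1]
      ext k
      rw [euc_sum_apply]
      simp only [PiLp.smul_apply, smul_eq_mul, ZeroMemClass.coe_zero, PiLp.zero_apply]
      rw [← hinner k]
      exact Finset.sum_congr rfl fun a _ => mul_comm _ _
    have := Fintype.linearIndependent_iff.mp b.linearIndependent (fun a => w a) hsum
    exact hw0 (by ext a; exact this a)
  obtain ⟨s, hsub, hsp, hind⟩ := exists_linearIndependent ℝ (Set.range u)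
  rw [hspan] at hsp
  letI : Fintype s := hind.setFinite.fintype
  have hcard : s.toFinset.card = d := by
    have h1 : Module.finrank ℝ (span ℝ s) = s.toFinset.card := finrank_span_set_eq_card hind
    rw [hsp, finrank_top] at h1
    rw [← h1, finrank_euclideanSpace_fin]
  have hchoose : ∀ x : s, ∃ k : Fin n, u k = (x : EuclideanSpace ℝ (Fin d)) := fun x => hsub x.2
  choose pick hpick using hchoose
  have hpickinj : Function.Injective pick := by
    intro x y hxy; apply Subtype.ext; rw [← hpick x, ← hpick y, hxy]
  set S : Finset (Fin n) := Finset.univ.image pick with hS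
  have hScard : S.card = d := by
    rw [hS, Finset.card_image_of_injective _ hpickinj, Finset.card_univ, ← Set.toFinset_card,
      hcard]
  set g : V →ₗ[ℝ] (S → ℝ) :=
    LinearMap.pi (fun t : S => (EuclideanSpace.projₗ (t : Fin n)).comp V.subtype) with hg
  have hg_apply : ∀ (v : V) (t : S), g v t = (v : EuclideanSpace ℝ (Fin n)) (t : Fin n) :=
    fun v t => rfl
  have hginj : Function.Injective g := by
    rw [← LinearMap.ker_eq_bot, Submodule.eq_bot_iff]
    intro v hv
    have hgv : g v = 0 := LinearMap.mem_ker.mp hv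
    set c : EuclideanSpace ℝ (Fin d) :=
      (WithLp.equiv 2 (Fin d → ℝ)).symm (fun a => b.repr v a) with hc
    have hc_apply : ∀ a, c a = b.repr v a := fun a => rfl
    have hvcoord : ∀ k : Fin n,
        (v : EuclideanSpace ℝ (Fin n)) k = ∑ a, b.repr v a * (b a : EuclideanSpace ℝ (Fin n)) k := by
      intro k
      conv_lhs => rw [← b.sum_repr v]
      have h1 : ((∑ a, b.repr v a • b a : V) : EuclideanSpace ℝ (Fin n))
          = ∑ a, b.repr v a • (b a : EuclideanSpace ℝ (Fin n)) := by push_cast; rfl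
      rw [h1, euc_sum_apply]
      simp only [PiLp.smul_apply, smul_eq_mul]
    set φ : EuclideanSpace ℝ (Fin d) →ₗ[ℝ] ℝ :=
      ∑ a, c a • (EuclideanSpace.projₗ a) with hφ
    have hφ_apply : ∀ x : EuclideanSpace ℝ (Fin d), φ x = ∑ a, c a * x a := by
      intro x
      rw [hφ]
      simp [LinearMap.sum_apply, LinearMap.smul_apply, EuclideanSpace.projₗ]
    have hker : s ⊆ (LinearMap.ker φ : Set (EuclideanSpace ℝ (Fin d))) := by
      intro x hx
      have hkS : pick ⟨x, hx⟩ ∈ S := Finset.mem_image_of_mem _ (Finset.mem_univ _)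
      have h0 : (v : EuclideanSpace ℝ (Fin n)) (pick ⟨x, hx⟩) = 0 := by
        have := congrFun hgv ⟨pick ⟨x, hx⟩, hkS⟩
        rwa [hg_apply] at this
      simp only [SetLike.mem_coe, LinearMap.mem_ker, hφ_apply]
      have hxu : (x : EuclideanSpace ℝ (Fin d)) = u (pick ⟨x, hx⟩) := (hpick ⟨x, hx⟩).symm
      calc ∑ a, c a * x a = ∑ a, b.repr v a * (b a : EuclideanSpace ℝ (Fin n)) (pick ⟨x, hx⟩) := by
            refine Finset.sum_congr rfl fun a _ => ?_
            have hxa : x a = (b a : EuclideanSpace ℝ (Fin n)) (pick ⟨x, hx⟩) := by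
              have := congrArg (fun w : EuclideanSpace ℝ (Fin d) => w a) hxu
              simpa [hu_apply] using this
            rw [hc_apply, hxa]
        _ = 0 := by rw [← hvcoord, h0]
    have hφ0 : φ c = 0 := by
      have : LinearMap.ker φ = ⊤ := top_unique (hsp ▸ Submodule.span_le.mpr hker)
      exact LinearMap.mem_ker.mp (this ▸ Submodule.mem_top)
    have hczero : ∀ a, c a = 0 := by
      rw [hφ_apply] at hφ0
      intro a
      have := (Finset.sum_eq_zero_iff_of_nonneg (fun a _ => mul_self_nonneg (c a))).mp hφ0 a
        (Finset.mem_univ a)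
      exact mul_self_eq_zero.mp this
    have : b.repr v = 0 := by
      ext a
      rw [← hc_apply a, hczero a]; rfl
    simpa using b.repr.map_eq_zero_iff.mp this
  have hfr : Module.finrank ℝ V = Module.finrank ℝ (S → ℝ) := by
    rw [hdim, Module.finrank_fintype_fun_eq_card, Fintype.card_coe, hScard]
  have hgsurj : Function.Surjective g :=
    (LinearMap.injective_iff_surjective_of_finrank_eq_finrank hfr).mp hginj
  obtain ⟨p, hp⟩ := hL
  obtain ⟨v, hgv⟩ := hgsurj (fun t => (round (p (t : Fin n)) : ℝ) - p (t : Fin n))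
  set x : EuclideanSpace ℝ (Fin n) := (v : EuclideanSpace ℝ (Fin n)) + p with hx
  have hxL : x ∈ (L : Set (EuclideanSpace ℝ (Fin n))) := by
    have := AffineSubspace.vadd_mem_of_mem_direction (v.2 : (v : EuclideanSpace ℝ (Fin n)) ∈ L.direction) hp
    rwa [vadd_eq_add] at this
  have hxS : ∀ t : Fin n, t ∈ S → ∃ m : ℤ, x t = m := by
    intro t ht
    refine ⟨round (p t), ?_⟩
    have h1 := congrFun hgv ⟨t, ht⟩
    rw [hg_apply] at h1
    rw [hx, PiLp.add_apply, h1]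
    ring
  set z : EuclideanSpace ℝ (Fin n) :=
    (WithLp.equiv 2 (Fin n → ℝ)).symm (fun k => (round (x k) : ℝ)) with hz
  have hz_apply : ∀ k, z k = (round (x k) : ℝ) := fun k => rfl
  set y : EuclideanSpace ℝ (Fin n) := x - z with hy
  have hy_apply : ∀ k, y k = x k - round (x k) := by
    intro k; rw [hy, PiLp.sub_apply, hz_apply]
  have hzmem : z ∈ intLattice n := fun k => ⟨round (x k), hz_apply k⟩
  have habs : ∀ k, |y k| ≤ 1/2 := by intro k; rw [hy_apply]; exact abs_sub_round _
  have hyS : ∀ t ∈ S, y t = 0 := by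
    intro t ht
    obtain ⟨m, hm⟩ := hxS t ht
    rw [hy_apply, hm, round_intCast, sub_self]
  have hsum : (∑ k, |y k|) ≤ j/2 := by
    rw [← Finset.sum_add_sum_compl S (fun k => |y k|)]
    have h1 : ∑ k ∈ S, |y k| = 0 := Finset.sum_eq_zero fun k hk => by rw [hyS k hk, abs_zero]
    have h2 : ∑ k ∈ Sᶜ, |y k| ≤ (Sᶜ.card : ℝ) * (1/2) := by
      have := Finset.sum_le_card_nsmul Sᶜ (fun k => |y k|) (1/2) (fun k _ => habs k)
      simpa [nsmul_eq_mul] using this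
    have h3 : (Sᶜ.card : ℝ) = (j : ℝ) := by
      rw [Finset.card_compl, hScard, Fintype.card_fin]
      norm_cast
      omega
    rw [h1, zero_add]
    calc ∑ k ∈ Sᶜ, |y k| ≤ (Sᶜ.card : ℝ) * (1/2) := h2
      _ = j/2 := by rw [h3]; ring
  exact ⟨y, z, hzmem, habs, hsum, by rwa [hy, sub_add_cancel]⟩

open Module Submodule in
lemma exists_subspace (n j : ℕ) (hj2 : j ≤ n) :
    ∃ L : AffineSubspace ℝ (EuclideanSpace ℝ (Fin n)),
      (L : Set (EuclideanSpace ℝ (Fin n))).Nonempty ∧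
      Module.finrank ℝ L.direction = n - j ∧
      ∀ x ∈ (L : Set (EuclideanSpace ℝ (Fin n))), ∀ k : Fin n, (k : ℕ) < j → x k = 1/2 := by
  classical
  set f : EuclideanSpace ℝ (Fin n) →ₗ[ℝ] (Fin j → ℝ) :=
    LinearMap.pi (fun a : Fin j => EuclideanSpace.projₗ (Fin.castLE hj2 a)) with hf
  have hf_apply : ∀ x a, f x a = x (Fin.castLE hj2 a) := fun x a => rfl
  set p : EuclideanSpace ℝ (Fin n) :=
    (WithLp.equiv 2 (Fin n → ℝ)).symm (fun k => if (k : ℕ) < j then (1/2 : ℝ) else 0) with hp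
  have hp_apply : ∀ k, p k = if (k : ℕ) < j then (1/2 : ℝ) else 0 :=
    fun k => rfl
  refine ⟨AffineSubspace.mk' p (LinearMap.ker f), ⟨p, AffineSubspace.self_mem_mk' _ _⟩, ?_, ?_⟩
  · rw [AffineSubspace.direction_mk']
    have hsurj : Function.Surjective f := by
      intro w
      refine ⟨(WithLp.equiv 2 (Fin n → ℝ)).symm
        (fun k => if h : (k : ℕ) < j then w ⟨k, h⟩ else 0), ?_⟩
      funext a
      rw [hf_apply]
      rw [WithLp.equiv_symm_apply, PiLp.toLp_apply]
      simp [Fin.coe_castLE, a.2]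
    have hrn := LinearMap.finrank_range_add_finrank_ker f
    rw [LinearMap.range_eq_top.mpr hsurj, finrank_top, Module.finrank_fintype_fun_eq_card,
      Fintype.card_fin, finrank_euclideanSpace_fin] at hrn
    omega
  · intro x hx k hk
    rw [SetLike.mem_coe, AffineSubspace.mem_mk'] at hx
    have h0 : f (x -ᵥ p) = 0 := LinearMap.mem_ker.mp hx
    have h1 := congrFun h0 ⟨k, hk⟩
    rw [hf_apply] at h1
    have hcast : Fin.castLE hj2 ⟨k, hk⟩ = k := by ext; simp
    rw [hcast] at h1
    have h2 : (x -ᵥ p) k = x k - p k := rfl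
    rw [h2, hp_apply] at h1
    simp only [Pi.zero_apply, if_pos hk] at h1
    linarith

lemma covMin_eq (n jj : ℕ) (K : Set (EuclideanSpace ℝ (Fin n))) (c : ℝ) (h0 : 0 < c)
    (hmem : ∀ L : AffineSubspace ℝ (EuclideanSpace ℝ (Fin n)),
      (L : Set (EuclideanSpace ℝ (Fin n))).Nonempty →
      Module.finrank ℝ L.direction = n - jj →
      ((c • K + intLattice n) ∩ (L : Set (EuclideanSpace ℝ (Fin n)))).Nonempty)
    (hlb : ∀ μ : ℝ, 0 < μ →
      (∀ L : AffineSubspace ℝ (EuclideanSpace ℝ (Fin n)),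
        (L : Set (EuclideanSpace ℝ (Fin n))).Nonempty →
        Module.finrank ℝ L.direction = n - jj →
        ((μ • K + intLattice n) ∩ (L : Set (EuclideanSpace ℝ (Fin n)))).Nonempty) → c ≤ μ) :
    covMin n jj K = c := by
  unfold covMin
  apply le_antisymm
  · exact csInf_le ⟨c, fun μ hμ => hlb μ hμ.1 hμ.2⟩ ⟨h0, hmem⟩
  · exact le_csInf ⟨c, h0, hmem⟩ fun μ hμ => hlb μ hμ.1 hμ.2

lemma smul_sum_abs (n : ℕ) (y : EuclideanSpace ℝ (Fin n)) (t : ℝ) (ht : 0 ≤ t) :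
    ∑ k, |(t • y) k| = t * ∑ k, |y k| := by
  rw [Finset.mul_sum]
  exact Finset.sum_congr rfl fun k _ => by
    rw [PiLp.smul_apply, smul_eq_mul, abs_mul, abs_of_nonneg ht]

lemma sum_half_le (n jj : ℕ) (hjn : jj ≤ n) (μ : ℝ) (hμ : 0 ≤ μ)
    (y : EuclideanSpace ℝ (Fin n))
    (hhalf : ∀ a : Fin jj, 1/2 ≤ μ * |y (Fin.castLE hjn a)|) :
    (jj : ℝ)/2 ≤ μ * ∑ k, |y k| := by
  calc (jj : ℝ)/2 = ∑ _a : Fin jj, (1/2 : ℝ) := by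
        rw [Finset.sum_const, Finset.card_univ, Fintype.card_fin, nsmul_eq_mul]; ring
    _ ≤ ∑ a : Fin jj, μ * |y (Fin.castLE hjn a)| := Finset.sum_le_sum fun a _ => hhalf a
    _ = μ * ∑ a : Fin jj, |y (Fin.castLE hjn a)| := by rw [Finset.mul_sum]
    _ ≤ μ * ∑ k, |y k| := by
        refine mul_le_mul_of_nonneg_left ?_ hμ
        have h1 : ∑ k ∈ Finset.univ.image (Fin.castLE hjn), |y k|
            = ∑ a : Fin jj, |y (Fin.castLE hjn a)| :=
          Finset.sum_image (fun a _ b _ h => Fin.castLE_injective hjn h)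
        rw [← h1]
        exact Finset.sum_le_sum_of_subset_of_nonneg (Finset.subset_univ _)
          (fun k _ _ => abs_nonneg _)

lemma cov_mem (n jj : ℕ) (hjn : jj ≤ n) (K : Set (EuclideanSpace ℝ (Fin n))) (c : ℝ)
    (hc : 0 < c)
    (hK : ∀ y : EuclideanSpace ℝ (Fin n), (∀ k, |y k| ≤ 1/2) → (∑ k, |y k|) ≤ jj/2 →
      c⁻¹ • y ∈ K) :
    ∀ L : AffineSubspace ℝ (EuclideanSpace ℝ (Fin n)),
      (L : Set (EuclideanSpace ℝ (Fin n))).Nonempty →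
      Module.finrank ℝ L.direction = n - jj →
      ((c • K + intLattice n) ∩ (L : Set (EuclideanSpace ℝ (Fin n)))).Nonempty := by
  intro L hL hd
  obtain ⟨y, z, hz, h1, h2, hmem⟩ := key_cover n jj hjn L hL hd
  exact ⟨y + z,
    Set.add_mem_add ((Set.mem_smul_set_iff_inv_smul_mem₀ hc.ne' K y).mpr (hK y h1 h2)) hz, hmem⟩

lemma cov_lb (n jj : ℕ) (hjn : jj ≤ n) (K : Set (EuclideanSpace ℝ (Fin n)))
    (c μ : ℝ) (hμ : 0 < μ)
    (hcov : ∀ L : AffineSubspace ℝ (EuclideanSpace ℝ (Fin n)),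
      (L : Set (EuclideanSpace ℝ (Fin n))).Nonempty →
      Module.finrank ℝ L.direction = n - jj →
      ((μ • K + intLattice n) ∩ (L : Set (EuclideanSpace ℝ (Fin n)))).Nonempty)
    (hK : ∀ y ∈ K, (∀ a : Fin jj, 1/2 ≤ μ * |y (Fin.castLE hjn a)|) → c ≤ μ) : c ≤ μ := by
  obtain ⟨L, hL, hd, hhalf⟩ := exists_subspace n jj hjn
  obtain ⟨x, hx1, hx2⟩ := hcov L hL hd
  obtain ⟨a, ha, z, hz, hxaz⟩ := Set.mem_add.mp hx1
  obtain ⟨y, hy, rfl⟩ := ha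
  refine hK y hy fun a' => ?_
  have hlt : ((Fin.castLE hjn a' : Fin n) : ℕ) < jj := by simpa using a'.2
  have h12 : x (Fin.castLE hjn a') = 1/2 := hhalf x hx2 _ hlt
  obtain ⟨m, hm⟩ := hz (Fin.castLE hjn a')
  have hxk : μ * y (Fin.castLE hjn a') + (m : ℝ) = 1/2 := by
    have h3 := congrArg (fun w : EuclideanSpace ℝ (Fin n) => w (Fin.castLE hjn a')) hxaz
    simp only [PiLp.add_apply, PiLp.smul_apply, smul_eq_mul] at h3
    rw [hm, h12] at h3
    exact h3
  have habs : (1:ℝ)/2 ≤ |μ * y (Fin.castLE hjn a')| := by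
    have heq : μ * y (Fin.castLE hjn a') = 1/2 - m := by linarith
    rw [heq]
    rcases le_or_gt m 0 with h | h
    · have hm0 : (m : ℝ) ≤ 0 := by exact_mod_cast h
      rw [abs_of_nonneg (by linarith)]; linarith
    · have hm1 : (1:ℝ) ≤ m := by exact_mod_cast h
      rw [abs_of_nonpos (by linarith)]; linarith
  rwa [abs_mul, abs_of_pos hμ] at habs

lemma mem_cube {n : ℕ} {x : EuclideanSpace ℝ (Fin n)} : x ∈ cube n ↔ ∀ k, |x k| ≤ 1 := Iff.rfl

lemma mem_cross {n : ℕ} {x : EuclideanSpace ℝ (Fin n)} :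
    x ∈ crosspolytope n ↔ ∑ k, |x k| ≤ 1 := Iff.rfl


/-- For `1 ≤ i ≤ n` and `1 ≤ j ≤ n`, the covering minima of `P_{n,i}` satisfy
`μ_j(P_{n,i}) = 1/2` for `j ≤ i` and `μ_j(P_{n,i}) = j/(2i)` for `j > i`.
In particular, `μ_i(C_n) = 1/2` and `μ_i(C_n^⋆) = i/2`. -/
theorem covMin_Pcc (n i j : ℕ) (hi1 : 1 ≤ i) (hi2 : i ≤ n) (hj1 : 1 ≤ j) (hj2 : j ≤ n) :
    (j ≤ i → covMin n j (Pcc n i) = 1 / 2) ∧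
    (i < j → covMin n j (Pcc n i) = (j : ℝ) / (2 * i)) ∧
    covMin n i (cube n) = 1 / 2 ∧
    covMin n i (crosspolytope n) = (i : ℝ) / 2 := by
  have hi0 : (0:ℝ) < i := by exact_mod_cast hi1
  have hj0 : (0:ℝ) < j := by exact_mod_cast hj1
  refine ⟨?_, ?_, ?_, ?_⟩
  · -- j ≤ i
    intro hji
    have hji' : (j:ℝ) ≤ i := by exact_mod_cast hji
    refine covMin_eq n j _ _ (by norm_num) (cov_mem n j hj2 _ _ (by norm_num) ?_) ?_
    · intro y hb hs
      refine Set.mem_inter (fun k => ?_) ?_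
      · rw [PiLp.smul_apply, smul_eq_mul, abs_mul]
        have h2 : |((1:ℝ)/2)⁻¹| = 2 := by norm_num
        rw [h2]
        linarith [hb k]
      · rw [Set.mem_smul_set_iff_inv_smul_mem₀ (hi0.ne' : (i:ℝ) ≠ 0), smul_smul, mem_cross,
          smul_sum_abs _ _ _ (by positivity)]
        have hS0 : 0 ≤ ∑ k, |y k| := Finset.sum_nonneg fun k _ => abs_nonneg _
        have h3 : (i:ℝ)⁻¹ * ((1:ℝ)/2)⁻¹ = 2/i := by field_simp
        rw [h3, div_mul_eq_mul_div, div_le_one hi0]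
        linarith
    · intro μ hμ hcov
      refine cov_lb n j hj2 _ _ μ hμ hcov fun y hy hhalf => ?_
      obtain ⟨hyc, -⟩ := hy
      have h1 := hhalf ⟨0, hj1⟩
      have h2 : |y (Fin.castLE hj2 ⟨0, hj1⟩)| ≤ 1 := hyc _
      nlinarith [mul_le_mul_of_nonneg_left h2 hμ.le]
  · -- i < j
    intro hij
    have hij' : (i:ℝ) ≤ j := by exact_mod_cast hij.le
    have hc0 : (0:ℝ) < (j:ℝ)/(2*i) := by positivity
    refine covMin_eq n j _ _ hc0 (cov_mem n j hj2 _ _ hc0 ?_) ?_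
    · intro y hb hs
      have hS0 : 0 ≤ ∑ k, |y k| := Finset.sum_nonneg fun k _ => abs_nonneg _
      refine Set.mem_inter (fun k => ?_) ?_
      · rw [PiLp.smul_apply, smul_eq_mul, abs_mul,
          abs_of_nonneg (by positivity : (0:ℝ) ≤ ((j:ℝ)/(2*i))⁻¹), inv_div,
          div_mul_eq_mul_div, div_le_one hj0]
        nlinarith [mul_le_mul_of_nonneg_left (hb k) (by positivity : (0:ℝ) ≤ 2*(i:ℝ))]
      · rw [Set.mem_smul_set_iff_inv_smul_mem₀ (hi0.ne' : (i:ℝ) ≠ 0), smul_smul, mem_cross,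
          smul_sum_abs _ _ _ (by positivity)]
        have h3 : (i:ℝ)⁻¹ * ((j:ℝ)/(2*i))⁻¹ = 2/j := by
          rw [inv_div]; field_simp
        rw [h3, div_mul_eq_mul_div, div_le_one hj0]
        linarith
    · intro μ hμ hcov
      refine cov_lb n j hj2 _ _ μ hμ hcov fun y hy hhalf => ?_
      obtain ⟨-, hyx⟩ := hy
      have h4 := (Set.mem_smul_set_iff_inv_smul_mem₀ (hi0.ne' : (i:ℝ) ≠ 0) _ _).mp hyx
      rw [mem_cross, smul_sum_abs _ _ _ (by positivity)] at h4
      have h5 := mul_le_mul_of_nonneg_left h4 hi0.le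
      rw [← mul_assoc, mul_inv_cancel₀ hi0.ne', one_mul, mul_one] at h5
      have hsum := sum_half_le n j hj2 μ hμ.le y hhalf
      rw [div_le_iff₀ (by positivity : (0:ℝ) < 2*(i:ℝ))]
      nlinarith [mul_le_mul_of_nonneg_left h5 hμ.le]
  · -- cube
    refine covMin_eq n i _ _ (by norm_num) (cov_mem n i hi2 _ _ (by norm_num) ?_) ?_
    · intro y hb hs
      intro k
      rw [PiLp.smul_apply, smul_eq_mul, abs_mul]
      have h2 : |((1:ℝ)/2)⁻¹| = 2 := by norm_num
      rw [h2]
      linarith [hb k]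
    · intro μ hμ hcov
      refine cov_lb n i hi2 _ _ μ hμ hcov fun y hy hhalf => ?_
      have h1 := hhalf ⟨0, hi1⟩
      have h2 : |y (Fin.castLE hi2 ⟨0, hi1⟩)| ≤ 1 := hy _
      nlinarith [mul_le_mul_of_nonneg_left h2 hμ.le]
  · -- crosspolytope
    have hc0 : (0:ℝ) < (i:ℝ)/2 := by positivity
    refine covMin_eq n i _ _ hc0 (cov_mem n i hi2 _ _ hc0 ?_) ?_
    · intro y hb hs
      rw [mem_cross, smul_sum_abs _ _ _ (by positivity), inv_div, div_mul_eq_mul_div,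
        div_le_one hi0]
      linarith
    · intro μ hμ hcov
      refine cov_lb n i hi2 _ _ μ hμ hcov fun y hy hhalf => ?_
      have hy' : ∑ k, |y k| ≤ 1 := hy
      have hsum := sum_half_le n i hi2 μ hμ.le y hhalf
      nlinarith [mul_le_mul_of_nonneg_left hy' hμ.le]
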